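/- arXiv:2105.14045 — 6 statements merged into one kernel-verified Lean document; each statement's English description precedes it below -/
import Mathlib

section
/- Let Z : X × Y → 𝒵. A set A ⊆ X × Y can be written as A = {(x,y) : y ∈ C_{Z(x,y)}} for some set-valued function C : 𝒵 → 2^Y if and only if for each y ∈ Y the function x ↦ Z(x,y) is injective. -/
/-- Every `A ⊆ X × Y` can be written as `{(x,y) : y ∈ C (Z (x,y))}` for some set-valued
function `C : 𝒵 → Set Y` if and only if `x ↦ Z (x,y)` is injective for each `y`. -/
theorem faulkenberry_representation_iff {X Y 𝒵 : Type*} (Z : X × Y → 𝒵) :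
    (∀ A : Set (X × Y), ∃ C : 𝒵 → Set Y, A = {p : X × Y | p.2 ∈ C (Z p)}) ↔
      ∀ y : Y, Function.Injective (fun x => Z (x, y)) := by
  constructor
  · intro h y x1 x2 hz
    obtain ⟨C, hC⟩ := h {(x1, y)}
    have h1 : ((x1, y) : X × Y) ∈ ({(x1, y)} : Set (X × Y)) := rfl
    rw [hC] at h1
    simp only [Set.mem_setOf_eq] at h1
    have h2 : ((x2, y) : X × Y) ∈ {p : X × Y | p.2 ∈ C (Z p)} := by
      simp only [Set.mem_setOf_eq]
      simpa [← hz] using h1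
    rw [← hC] at h2
    simpa using h2.symm
  · intro hinj A
    refine ⟨fun z => {y | ∃ x, Z (x, y) = z ∧ (x, y) ∈ A}, ?_⟩
    ext ⟨x, y⟩
    simp only [Set.mem_setOf_eq]
    constructor
    · intro hA; exact ⟨x, rfl, hA⟩
    · rintro ⟨x', hz, hA⟩
      have : x' = x := hinj y hz
      rwa [this] at hA
end

section
/- Let Z : X × Y → 𝒵. A set A ⊆ X × Y can be written as A = {(x,y) : x ∈ B_{Z(x,y)}} for some set-valued function B : 𝒵 → 2^X if and only if for each x ∈ X the function y ↦ Z(x,y) is injective. -/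
/-- Every `A ⊆ X × Y` can be written as `{(x,y) : x ∈ B (Z (x,y))}` for some set-valued
function `B : 𝒵 → Set X` if and only if `y ↦ Z (x,y)` is injective for each `x`. -/
theorem faulkenberry_representation_iff' {X Y 𝒵 : Type*} (Z : X × Y → 𝒵) :
    (∀ A : Set (X × Y), ∃ B : 𝒵 → Set X, A = {p : X × Y | p.1 ∈ B (Z p)}) ↔
      ∀ x : X, Function.Injective (fun y => Z (x, y)) := by
  constructor
  · intro h x y1 y2 hz
    obtain ⟨B, hB⟩ := h {(x, y1)}
    have h1 : ((x, y1) : X × Y) ∈ ({(x, y1)} : Set (X × Y)) := rfl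
    rw [hB] at h1
    have h2 : ((x, y2) : X × Y) ∈ {p : X × Y | p.1 ∈ B (Z p)} := by
      simpa [← hz] using h1
    rw [← hB] at h2
    exact (Prod.mk.injEq .. ▸ h2 : x = x ∧ y2 = y1).2.symm
  · intro hinj A
    refine ⟨fun z => {x | ∃ y, Z (x, y) = z ∧ (x, y) ∈ A}, ?_⟩
    ext ⟨x, y⟩
    simp only [Set.mem_setOf_eq]
    constructor
    · intro h; exact ⟨y, rfl, h⟩
    · rintro ⟨y', hz, hy'⟩
      rwa [hinj x hz] at hy'
end

section
/- Let Z be a boundedly complete statistic with regular conditional probability {P_z} common to all P_θ. If A is measurable with P_θ(A) = 1 − α for all θ ∈ Θ, then P_z(A) = 1 − α for ν_θ-almost all z, for every θ ∈ Θ. -/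
open MeasureTheory

/-- If `A` has constant coverage `1 - α` under every `P θ`, then its conditional
probability given a boundedly complete statistic `Z` equals `1 - α` almost surely. -/
theorem bounded_complete_constant_conditional_coverage {Ω 𝒵 Θ : Type*}
    [MeasurableSpace Ω] [MeasurableSpace 𝒵]
    (P : Θ → Measure Ω) (hPprob : ∀ θ, IsProbabilityMeasure (P θ))
    (Z : Ω → 𝒵) (hZ : Measurable Z)
    (Pz : 𝒵 → Measure Ω) (hPzprob : ∀ z, IsProbabilityMeasure (Pz z))
    (hPzmeas : ∀ A : Set Ω, MeasurableSet A → Measurable fun z => Pz z A)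
    (hdisint : ∀ θ, ∀ A : Set Ω, MeasurableSet A → ∀ H : Set 𝒵, MeasurableSet H →
      P θ (A ∩ Z ⁻¹' H) = ∫⁻ z in H, Pz z A ∂((P θ).map Z))
    (hcomplete : ∀ f : 𝒵 → ℝ, Measurable f → (∃ M, ∀ z, |f z| ≤ M) →
      ∀ c : ℝ, (∀ θ, ∫ z, f z ∂((P θ).map Z) = c) →
        ∀ θ, ∀ᵐ z ∂((P θ).map Z), f z = c)
    (α : ℝ) (hα : α ∈ Set.Icc (0 : ℝ) 1)
    (A : Set Ω) (hA : MeasurableSet A)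
    (hcov : ∀ θ, P θ A = ENNReal.ofReal (1 - α)) :
    ∀ θ, ∀ᵐ z ∂((P θ).map Z), Pz z A = ENNReal.ofReal (1 - α) := by
  set f : 𝒵 → ℝ := fun z => (Pz z A).toReal with hf
  have hfin : ∀ z, Pz z A ≠ ⊤ := fun z => (measure_ne_top (Pz z) A)
  have hmeasf : Measurable f := (hPzmeas A hA).ennreal_toReal
  have hbd : ∃ M, ∀ z, |f z| ≤ M := by
    refine ⟨1, fun z => ?_⟩
    rw [abs_of_nonneg ENNReal.toReal_nonneg]
    exact ENNReal.toReal_le_of_le_ofReal zero_le_one (by simpa using prob_le_one)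
  have hconst : ∀ θ, ∫ z, f z ∂((P θ).map Z) = 1 - α := by
    intro θ
    have hint : ∫⁻ z, Pz z A ∂((P θ).map Z) = ENNReal.ofReal (1 - α) := by
      have := hdisint θ A hA Set.univ MeasurableSet.univ
      simpa [hcov θ] using this.symm
    rw [integral_toReal ((hPzmeas A hA).aemeasurable)
      (Filter.Eventually.of_forall fun z => (hfin z).lt_top), hint,
      ENNReal.toReal_ofReal (by linarith [hα.2])]
  intro θ
  filter_upwards [hcomplete f hmeasf hbd (1 - α) hconst θ] with z hz
  rw [← ENNReal.ofReal_toReal (hfin z)]; exact congrArg ENNReal.ofReal hz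
end

section
/- Let {ν_θ : θ ∈ Θ} be a family of probability measures on (𝒵, ℋ) such that for every ε > 0 and every set H ∈ ℋ that is non-null for the family (i.e., ν_θ(H) > 0 for some θ), there exists θ_ε ∈ Θ with ν_{θ_ε}(H) > 1 − ε. Then for any bounded measurable function h : 𝒵 → ℝ with ∫ h dν_θ ≥ 0 for all θ ∈ Θ, it holds that h(z) ≥ 0 for ν_θ-almost all z, for every θ ∈ Θ. -/
open MeasureTheory

/-- If the family `{ν θ}` contains measures arbitrarily concentrated on every non-null set,
then any bounded measurable `h` with nonnegative integral under every `ν θ` is nonnegative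
`ν θ`-almost everywhere, for every `θ`. -/
theorem concentration_implies_ae_nonneg {𝒵 Θ : Type*} [MeasurableSpace 𝒵]
    (ν : Θ → Measure 𝒵) (hν : ∀ θ, IsProbabilityMeasure (ν θ))
    (hconc : ∀ ε : ℝ, 0 < ε → ∀ H : Set 𝒵, MeasurableSet H → (∃ θ, 0 < ν θ H) →
      ∃ θ', ENNReal.ofReal (1 - ε) < ν θ' H)
    (h : 𝒵 → ℝ) (hmeas : Measurable h) (hbdd : ∃ M, ∀ z, |h z| ≤ M)
    (hint : ∀ θ, 0 ≤ ∫ z, h z ∂(ν θ)) :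
    ∀ θ, ∀ᵐ z ∂(ν θ), 0 ≤ h z := by
  obtain ⟨M, hM⟩ := hbdd
  set M' : ℝ := max M 0 with hM'def
  have hM'0 : 0 ≤ M' := le_max_right _ _
  have hM' : ∀ z, |h z| ≤ M' := fun z => (hM z).trans (le_max_left _ _)
  intro θ
  by_contra hcon
  rw [ae_iff] at hcon
  -- find δ > 0 such that {h ≤ -δ} has positive measure
  have hexδ : ∃ δ : ℝ, 0 < δ ∧ 0 < ν θ {z | h z ≤ -δ} := by
    by_contra hno
    push_neg at hno
    apply hcon
    have hsub : {z | ¬ 0 ≤ h z} ⊆ ⋃ n : ℕ, {z | h z ≤ -(1 / (n + 1))} := by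
      intro z hz
      simp only [Set.mem_setOf_eq, not_le] at hz
      obtain ⟨n, hn⟩ := exists_nat_one_div_lt (show (0:ℝ) < -h z by linarith)
      exact Set.mem_iUnion.2 ⟨n, by simp only [Set.mem_setOf_eq]; linarith⟩
    refine measure_mono_null hsub (measure_iUnion_null fun n => le_antisymm ?_ zero_le)
    exact hno (1 / (n + 1)) (by positivity)
  obtain ⟨δ, hδ, hpos⟩ := hexδ
  set ε : ℝ := δ / (2 * (M' + δ)) with hεdef
  have hMδ : 0 < M' + δ := by linarith
  have hε : 0 < ε := by positivity
  have hεhalf : ε ≤ 1 / 2 := by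
    rw [hεdef, div_le_div_iff₀ (by linarith) (by norm_num)]
    nlinarith
  have hHmeas : MeasurableSet {z | h z ≤ -δ} := hmeas measurableSet_Iic
  obtain ⟨θ', hθ'⟩ := hconc ε hε {z | h z ≤ -δ} hHmeas ⟨θ, hpos⟩
  have := hν θ'
  -- p := measure of H under ν θ'
  set H := {z | h z ≤ -δ}
  have hH1 : ν θ' H ≤ 1 := prob_le_one
  have hHtop : ν θ' H ≠ ⊤ := (lt_of_le_of_lt hH1 ENNReal.one_lt_top).ne
  set p : ℝ := (ν θ' H).toReal with hpdef
  have hp1 : p ≤ 1 := by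
    rw [hpdef]
    exact ENNReal.toReal_le_of_le_ofReal zero_le_one (by simpa using hH1)
  have hplb : 1 - ε < p := by
    have := (ENNReal.toReal_lt_toReal ENNReal.ofReal_ne_top hHtop).2 hθ'
    rwa [ENNReal.toReal_ofReal (by linarith)] at this
  -- integrability
  have hInt : Integrable h (ν θ') :=
    (integrable_const M').mono' hmeas.aestronglyMeasurable (ae_of_all _ hM')
  -- bound the integral
  have hcomp : (ν θ' Hᶜ).toReal = 1 - p := by
    rw [measure_compl hHmeas hHtop, measure_univ,
      ENNReal.toReal_sub_of_le hH1 ENNReal.one_ne_top, ENNReal.toReal_one, hpdef]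
  have hIH : ∫ z in H, h z ∂(ν θ') ≤ -δ * p := by
    calc ∫ z in H, h z ∂(ν θ') ≤ ∫ _ in H, (-δ) ∂(ν θ') := by
          refine setIntegral_mono_on hInt.integrableOn (integrableOn_const ?_)
            hHmeas (fun z hz => hz)
          exact (lt_of_le_of_lt hH1 ENNReal.one_lt_top).ne
      _ = -δ * p := by rw [setIntegral_const, smul_eq_mul, mul_comm, hpdef, measureReal_def]
  have hIHc : ∫ z in Hᶜ, h z ∂(ν θ') ≤ M' * (1 - p) := by
    calc ∫ z in Hᶜ, h z ∂(ν θ') ≤ ∫ _ in Hᶜ, M' ∂(ν θ') := by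
          refine setIntegral_mono_on hInt.integrableOn (integrableOn_const ?_)
            hHmeas.compl (fun z _ => (abs_le.1 (hM' z)).2)
          exact (lt_of_le_of_lt prob_le_one ENNReal.one_lt_top).ne
      _ = M' * (1 - p) := by rw [setIntegral_const, smul_eq_mul, mul_comm, measureReal_def, hcomp, mul_comm]
  have htot : ∫ z, h z ∂(ν θ') = (∫ z in H, h z ∂(ν θ')) + ∫ z in Hᶜ, h z ∂(ν θ') :=
    (integral_add_compl hHmeas hInt).symm
  have hlt : ∫ z, h z ∂(ν θ') < 0 := by
    rw [htot]
    have hεeq : ε * (2 * (M' + δ)) = δ := by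
      rw [hεdef]; field_simp
    nlinarith [hint θ']
  exact absurd (hint θ') (not_le.2 hlt)
end

section
/- For any function δ : ℝ → ℝ, the set A = {(x,y) ∈ ℝ² : |(x−y)/(σ√(k+1)) + δ(Z(x,y))|² < χ²_{1, δ(Z(x,y))², 1−α}} satisfies P_θ(A) = 1 − α for every θ ∈ ℝ, where X ~ N(θ, kσ²) and Y ~ N(θ, σ²) are independent and Z(x,y) = (x + ky)/(1+k). -/
open MeasureTheory ProbabilityTheory Real Set
open scoped ENNReal NNReal

namespace FabAux

noncomputable def Gfun (d s : ℝ) : ℝ≥0∞ := gaussianReal 0 1 (Set.Ioo (-d - s) (-d + s))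

lemma measurable_Gfun : Measurable (fun p : ℝ × ℝ => Gfun p.1 p.2) := by
  have hU : MeasurableSet {p : (ℝ × ℝ) × ℝ | -p.1.1 - p.1.2 < p.2 ∧ p.2 < -p.1.1 + p.1.2} := by
    apply MeasurableSet.inter
    · exact measurableSet_lt (by fun_prop) measurable_snd
    · exact measurableSet_lt measurable_snd (by fun_prop)
  have h := measurable_measure_prodMk_left (ν := gaussianReal 0 1) hU
  exact h

lemma gaussianReal_Ioo_pos {a b : ℝ} (h : a < b) : 0 < gaussianReal 0 1 (Set.Ioo a b) := by
  rw [pos_iff_ne_zero, gaussianReal_of_var_ne_zero _ one_ne_zero]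
  rw [ne_eq, withDensity_apply_eq_zero (measurable_gaussianPDF _ _)]
  have h1 : {x | gaussianPDF 0 1 x ≠ 0} = Set.univ := by
    ext x; simp [(gaussianPDF_pos 0 one_ne_zero x).ne']
  rw [h1, Set.univ_inter]
  simp [Real.volume_Ioo, ENNReal.ofReal_eq_zero, not_le, sub_pos, h]

lemma Gfun_mono (d : ℝ) {s t : ℝ} (hst : s ≤ t) : Gfun d s ≤ Gfun d t :=
  measure_mono (Set.Ioo_subset_Ioo (by linarith) (by linarith))

lemma Gfun_strictMono (d : ℝ) {s t : ℝ} (hs : 0 ≤ s) (hst : s < t) : Gfun d s < Gfun d t := by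
  have hsub : Set.Ioo (-d - s) (-d + s) ∪ Set.Ioo (-d + s) (-d + t) ⊆ Set.Ioo (-d - t) (-d + t) := by
    rintro x (hx | hx) <;> simp only [Set.mem_Ioo] at hx ⊢ <;> constructor <;> linarith [hx.1, hx.2]
  have hdisj : Disjoint (Set.Ioo (-d - s) (-d + s)) (Set.Ioo (-d + s) (-d + t)) := by
    rw [Set.disjoint_left]
    intro x hx hx'
    simp only [Set.mem_Ioo] at hx hx'
    linarith [hx.2, hx'.1]
  have hpos : 0 < gaussianReal 0 1 (Set.Ioo (-d + s) (-d + t)) :=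
    gaussianReal_Ioo_pos (by linarith)
  calc Gfun d s < Gfun d s + gaussianReal 0 1 (Set.Ioo (-d + s) (-d + t)) :=
        ENNReal.lt_add_right (measure_ne_top _ _) hpos.ne'
    _ = gaussianReal 0 1 (Set.Ioo (-d - s) (-d + s) ∪ Set.Ioo (-d + s) (-d + t)) :=
        (measure_union hdisj measurableSet_Ioo).symm
    _ ≤ Gfun d t := measure_mono hsub

lemma cond_iff {α : ℝ} (hα : α ∈ Set.Ioo (0:ℝ) 1) {q : ℝ → ℝ}
    (hq : ∀ d : ℝ, gaussianReal 0 1 {w | (w + d) ^ 2 < q (d ^ 2)} = ENNReal.ofReal (1 - α))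
    (d w : ℝ) :
    ((w + d) ^ 2 < q (d ^ 2)) ↔ Gfun d |w + d| < ENNReal.ofReal (1 - α) := by
  have hc0 : (0:ℝ≥0∞) < ENNReal.ofReal (1 - α) := by
    rw [ENNReal.ofReal_pos]; linarith [hα.2]
  have hqpos : 0 < q (d ^ 2) := by
    by_contra hle
    push_neg at hle
    have hemp : {w' : ℝ | (w' + d) ^ 2 < q (d ^ 2)} = ∅ := by
      ext w'
      simp only [Set.mem_setOf_eq, Set.mem_empty_iff_false, iff_false, not_lt]
      exact hle.trans (sq_nonneg _)
    have h2 := hq d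
    rw [hemp, measure_empty] at h2
    exact hc0.ne h2
  set ρ := Real.sqrt (q (d ^ 2)) with hρdef
  have hρ : 0 < ρ := Real.sqrt_pos.mpr hqpos
  have key : ∀ w' : ℝ, ((w' + d) ^ 2 < q (d ^ 2)) ↔ |w' + d| < ρ := fun w' => by
    rw [← Real.sqrt_sq_eq_abs, hρdef, Real.sqrt_lt_sqrt_iff (sq_nonneg _)]
  have hset : {w' : ℝ | (w' + d) ^ 2 < q (d ^ 2)} = Set.Ioo (-d - ρ) (-d + ρ) := by
    ext w'
    rw [Set.mem_setOf_eq, key w', abs_lt, Set.mem_Ioo]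
    constructor <;> rintro ⟨h1, h2⟩ <;> constructor <;> linarith
  have hGρ : Gfun d ρ = ENNReal.ofReal (1 - α) := by
    rw [Gfun, ← hset, hq]
  rw [key w]
  constructor
  · intro h
    exact hGρ ▸ Gfun_strictMono d (abs_nonneg _) h
  · intro h
    by_contra hge
    push_neg at hge
    exact absurd h (not_lt.mpr (hGρ ▸ Gfun_mono d hge))
lemma density_eq (θ y z : ℝ) (σ2 k : ℝ≥0) (hσ : 0 < σ2) (hk : 0 < k) :
    gaussianPDFReal ((1+(k:ℝ))⁻¹*θ + (k:ℝ)*y/(1+(k:ℝ)))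
        (NNReal.mk (((1+(k:ℝ))⁻¹)^2) (sq_nonneg _) * (k*σ2)) z * gaussianPDFReal θ σ2 y
      = gaussianPDFReal z (σ2 / (1+k)) y * gaussianPDFReal θ (k*σ2 / (1+k)) z := by
  have hk' : (0:ℝ) < k := hk
  have hσ' : (0:ℝ) < σ2 := hσ
  have h1k : (0:ℝ) < 1 + (k:ℝ) := by linarith
  unfold gaussianPDFReal
  have hco1 : ((NNReal.mk (((1+(k:ℝ))⁻¹)^2) (sq_nonneg _) * (k*σ2) : ℝ≥0) : ℝ)
      = ((1+(k:ℝ))⁻¹)^2 * ((k:ℝ)*(σ2:ℝ)) := by push_cast; ring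
  have hco2 : ((σ2 / (1+k) : ℝ≥0):ℝ) = (σ2:ℝ)/(1+(k:ℝ)) := by push_cast; ring
  have hco3 : ((k*σ2 / (1+k) : ℝ≥0):ℝ) = (k:ℝ)*(σ2:ℝ)/(1+(k:ℝ)) := by push_cast; ring
  rw [hco1, hco2, hco3]
  set V : ℝ := ((1+(k:ℝ))⁻¹)^2 * ((k:ℝ)*(σ2:ℝ)) with hV
  set S2 : ℝ := (σ2:ℝ)/(1+(k:ℝ)) with hS2
  set T2 : ℝ := (k:ℝ)*(σ2:ℝ)/(1+(k:ℝ)) with hT2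
  have hVpos : 0 < V := by positivity
  have hS2pos : 0 < S2 := by positivity
  have hT2pos : 0 < T2 := by positivity
  have lhs_eq : (√(2*π*V))⁻¹ * rexp (-(z - ((1+(k:ℝ))⁻¹*θ + (k:ℝ)*y/(1+(k:ℝ))))^2/(2*V)) *
      ((√(2*π*(σ2:ℝ)))⁻¹ * rexp (-(y-θ)^2/(2*(σ2:ℝ))))
      = (√(2*π*V) * √(2*π*(σ2:ℝ)))⁻¹ *
        rexp (-(z - ((1+(k:ℝ))⁻¹*θ + (k:ℝ)*y/(1+(k:ℝ))))^2/(2*V) + -(y-θ)^2/(2*(σ2:ℝ))) := by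
    rw [Real.exp_add, mul_inv]; ring
  have rhs_eq : (√(2*π*S2))⁻¹ * rexp (-(y-z)^2/(2*S2)) *
      ((√(2*π*T2))⁻¹ * rexp (-(z-θ)^2/(2*T2)))
      = (√(2*π*S2) * √(2*π*T2))⁻¹ * rexp (-(y-z)^2/(2*S2) + -(z-θ)^2/(2*T2)) := by
    rw [Real.exp_add, mul_inv]; ring
  rw [lhs_eq, rhs_eq]
  congr 1
  · congr 1
    rw [← Real.sqrt_mul (by positivity), ← Real.sqrt_mul (by positivity)]
    congr 1
    rw [hV, hS2, hT2]
    field_simp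
  · congr 1
    rw [hV, hS2, hT2]
    field_simp
    ring


lemma density_eq' (θ y z : ℝ) (σ2 k : ℝ≥0) (hσ : 0 < σ2) (hk : 0 < k) :
    gaussianPDF ((1+(k:ℝ))⁻¹*θ + (k:ℝ)*y/(1+(k:ℝ)))
        (NNReal.mk (((1+(k:ℝ))⁻¹)^2) (sq_nonneg _) * (k*σ2)) z * gaussianPDF θ σ2 y
      = gaussianPDF z (σ2 / (1+k)) y * gaussianPDF θ (k*σ2 / (1+k)) z := by
  simp only [gaussianPDF]
  rw [← ENNReal.ofReal_mul (gaussianPDFReal_nonneg _ _ _),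
    ← ENNReal.ofReal_mul (gaussianPDFReal_nonneg _ _ _)]
  exact congrArg ENNReal.ofReal (density_eq θ y z σ2 k hσ hk)

end FabAux


open FabAux

/-- Constant `1 − α` coverage of the prediction set built from any function `δ` and the
noncentral chi-squared quantile: here `q ncp` denotes the `1 − α` quantile of the
noncentral `χ²₁` distribution with noncentrality parameter `ncp`, characterized by the
hypothesis `hq` (the noncentral `χ²₁(d²)` law being the law of `(W + d)²`, `W ~ N(0,1)`). -/
theorem fab_gaussian_constant_coverage {Ω : Type*} [MeasurableSpace Ω]
    (μ : Measure Ω) [IsProbabilityMeasure μ]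
    (σ2 k : NNReal) (hσ : 0 < σ2) (hk : 0 < k)
    (α : ℝ) (hα : α ∈ Set.Ioo (0 : ℝ) 1)
    (q : ℝ → ℝ)
    (hq : ∀ d : ℝ, gaussianReal 0 1 {w | (w + d) ^ 2 < q (d ^ 2)} = ENNReal.ofReal (1 - α))
    (δ : ℝ → ℝ) (hδ : Measurable δ)
    (θ : ℝ) (X Y : Ω → ℝ) (hmX : Measurable X) (hmY : Measurable Y)
    (hindep : IndepFun X Y μ)
    (hX : μ.map X = gaussianReal θ (k * σ2))
    (hY : μ.map Y = gaussianReal θ σ2) :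
    μ {ω | ((X ω - Y ω) / (Real.sqrt σ2 * Real.sqrt ((k : ℝ) + 1)) +
          δ ((X ω + (k : ℝ) * Y ω) / (1 + (k : ℝ)))) ^ 2 <
        q (δ ((X ω + (k : ℝ) * Y ω) / (1 + (k : ℝ))) ^ 2)} = ENNReal.ofReal (1 - α) := by
  have hσ' : (0:ℝ) < σ2 := hσ
  have hk' : (0:ℝ) < k := hk
  have h1k : (0:ℝ) < 1 + (k:ℝ) := by linarith
  set kr : ℝ := (k:ℝ) with hkr_def
  set a : ℝ := Real.sqrt σ2 * Real.sqrt (kr + 1) with ha_def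
  have ha : 0 < a := by
    apply mul_pos (Real.sqrt_pos.mpr hσ') (Real.sqrt_pos.mpr (by linarith))
  have ha2 : a ^ 2 = (σ2:ℝ) * (kr + 1) := by
    rw [ha_def, mul_pow, Real.sq_sqrt hσ'.le, Real.sq_sqrt (by linarith)]
  set c0 : ℝ≥0∞ := ENNReal.ofReal (1 - α) with hc0_def
  -- the measurable event set in (x, y) coordinates
  set S : Set (ℝ × ℝ) := {p : ℝ × ℝ |
      Gfun (δ ((p.1 + kr * p.2) / (1 + kr)))
        |(p.1 - p.2) / a + δ ((p.1 + kr * p.2) / (1 + kr))| < c0} with hS_def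
  have hmz : Measurable (fun p : ℝ × ℝ => (p.1 + kr * p.2) / (1 + kr)) := by fun_prop
  have hmw : Measurable (fun p : ℝ × ℝ => (p.1 - p.2) / a) := by fun_prop
  have hGS : Measurable (fun p : ℝ × ℝ =>
      Gfun (δ ((p.1 + kr * p.2) / (1 + kr)))
        |(p.1 - p.2) / a + δ ((p.1 + kr * p.2) / (1 + kr))|) :=
    measurable_Gfun.comp ((hδ.comp hmz).prodMk ((hmw.add (hδ.comp hmz)).abs))
  have hSm : MeasurableSet S := measurableSet_lt hGS measurable_const
  -- rewrite the event using `cond_iff`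
  have hev : {ω | ((X ω - Y ω) / a + δ ((X ω + kr * Y ω) / (1 + kr))) ^ 2 <
        q (δ ((X ω + kr * Y ω) / (1 + kr)) ^ 2)}
      = (fun ω => (X ω, Y ω)) ⁻¹' S := by
    ext ω
    simp only [hS_def, Set.mem_setOf_eq, Set.mem_preimage]
    exact cond_iff hα hq _ _
  rw [hev, ← Measure.map_apply (hmX.prodMk hmY) hSm,
    (indepFun_iff_map_prod_eq_prod_map_map hmX.aemeasurable hmY.aemeasurable).mp hindep,
    hX, hY, Measure.prod_apply_symm hSm]
  -- conditional mean and variance after mapping x ↦ (x + k y)/(1+k)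
  set Vn : ℝ≥0 := NNReal.mk (((1 + kr)⁻¹) ^ 2) (sq_nonneg _) * (k * σ2) with hVn_def
  have hVn_pos : 0 < Vn := by
    rw [← NNReal.coe_pos]
    push_cast [hVn_def]
    positivity
  set M : ℝ → ℝ := fun y => (1 + kr)⁻¹ * θ + kr * y / (1 + kr) with hM_def
  set T : Set (ℝ × ℝ) := {p : ℝ × ℝ |
      Gfun (δ p.2) |(1 + kr) * (p.2 - p.1) / a + δ p.2| < c0} with hT_def
  have hTm : MeasurableSet T := by
    apply measurableSet_lt _ measurable_const
    exact measurable_Gfun.comp ((hδ.comp measurable_snd).prodMk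
      (((((measurable_snd.sub measurable_fst).const_mul (1 + kr)).div_const a).add
        (hδ.comp measurable_snd)).abs))
  have hmapTy : ∀ y : ℝ, (gaussianReal θ (k * σ2)).map (fun x => (x + kr * y) / (1 + kr))
      = gaussianReal (M y) Vn := by
    intro y
    have hfun : (fun x : ℝ => (x + kr * y) / (1 + kr))
        = (fun u => u + kr * y / (1 + kr)) ∘ ((1 + kr)⁻¹ * ·) := by
      funext x
      simp only [Function.comp_apply]
      field_simp
    rw [hfun, ← Measure.map_map (measurable_add_const _) (measurable_const_mul _),
      gaussianReal_map_const_mul, gaussianReal_map_add_const]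
  have hpdfVm : Measurable (fun p : ℝ × ℝ => gaussianPDF (M p.1) Vn p.2) := by
    unfold gaussianPDF gaussianPDFReal
    apply Measurable.ennreal_ofReal
    fun_prop
  have hFm : Measurable (T.indicator (fun p : ℝ × ℝ => gaussianPDF (M p.1) Vn p.2)) :=
    hpdfVm.indicator hTm
  have hym : ∀ z : ℝ, MeasurableSet {y : ℝ | (y, z) ∈ T} :=
    fun z => hTm.preimage (measurable_id.prodMk measurable_const)
  have hzm : ∀ y : ℝ, MeasurableSet {z : ℝ | (y, z) ∈ T} :=
    fun y => hTm.preimage (measurable_const.prodMk measurable_id)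
  -- slice computation
  have hslice : ∀ y : ℝ, gaussianReal θ (k * σ2) ((fun x => (x, y)) ⁻¹' S)
      = ∫⁻ z, T.indicator (fun p : ℝ × ℝ => gaussianPDF (M p.1) Vn p.2) (y, z) ∂volume := by
    intro y
    have hpre : ((fun x => (x, y)) ⁻¹' S)
        = (fun x => (x + kr * y) / (1 + kr)) ⁻¹' {z | (y, z) ∈ T} := by
      ext x
      simp only [hS_def, hT_def, Set.mem_preimage, Set.mem_setOf_eq]
      have harg : (x - y) / a = (1 + kr) * ((x + kr * y) / (1 + kr) - y) / a := by
        congr 1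
        field_simp
        ring
      rw [harg]
    rw [hpre, ← Measure.map_apply (by fun_prop) (hzm y), hmapTy y,
      gaussianReal_apply _ hVn_pos.ne', ← lintegral_indicator (hzm y)]
    refine lintegral_congr fun z => ?_
    by_cases hzT : (y, z) ∈ T
    · rw [Set.indicator_of_mem hzT, Set.indicator_of_mem (show z ∈ {z | (y, z) ∈ T} from hzT)]
    · rw [Set.indicator_of_notMem hzT,
        Set.indicator_of_notMem (show z ∉ {z | (y, z) ∈ T} from hzT)]
  simp_rw [hslice]
  have hinner_meas : Measurable (fun y : ℝ =>
      ∫⁻ z, T.indicator (fun p : ℝ × ℝ => gaussianPDF (M p.1) Vn p.2) (y, z) ∂volume) :=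
    Measurable.lintegral_prod_right' hFm
  rw [gaussianReal_of_var_ne_zero θ hσ.ne',
    lintegral_withDensity_eq_lintegral_mul _ (measurable_gaussianPDF _ _) hinner_meas]
  have hstep : ∀ y : ℝ, (gaussianPDF θ σ2 * fun y =>
        ∫⁻ z, T.indicator (fun p : ℝ × ℝ => gaussianPDF (M p.1) Vn p.2) (y, z) ∂volume) y
      = ∫⁻ z, gaussianPDF θ σ2 y *
          T.indicator (fun p : ℝ × ℝ => gaussianPDF (M p.1) Vn p.2) (y, z) ∂volume := by
    intro y
    simp only [Pi.mul_apply]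
    have hfz : Measurable fun z : ℝ => T.indicator (fun p : ℝ × ℝ => gaussianPDF (M p.1) Vn p.2) (y, z) :=
      hFm.comp measurable_prodMk_left
    exact (lintegral_const_mul _ hfz).symm
  simp_rw [hstep]
  have hunc : Measurable (Function.uncurry fun (y z : ℝ) => gaussianPDF θ σ2 y *
      T.indicator (fun p : ℝ × ℝ => gaussianPDF (M p.1) Vn p.2) (y, z)) := by
    exact ((measurable_gaussianPDF θ σ2).comp measurable_fst).mul hFm
  rw [lintegral_lintegral_swap hunc.aemeasurable]
  -- now integrate over y for fixed z
  set s2n : ℝ≥0 := σ2 / (1 + k) with hs2n_def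
  set t2n : ℝ≥0 := k * σ2 / (1 + k) with ht2n_def
  have h1kn : (0:ℝ≥0) < 1 + k := by
    rw [← NNReal.coe_pos]; push_cast; linarith
  have hs2n_pos : 0 < s2n := by
    rw [hs2n_def]; exact div_pos hσ h1kn
  have ht2n_pos : 0 < t2n := by
    rw [ht2n_def]; exact div_pos (mul_pos hk hσ) h1kn
  have hzint : ∀ z : ℝ, ∫⁻ y, gaussianPDF θ σ2 y *
      T.indicator (fun p : ℝ × ℝ => gaussianPDF (M p.1) Vn p.2) (y, z) ∂volume
      = c0 * gaussianPDF θ t2n z := by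
    intro z
    have h1 : ∀ y : ℝ, gaussianPDF θ σ2 y *
        T.indicator (fun p : ℝ × ℝ => gaussianPDF (M p.1) Vn p.2) (y, z)
        = ({y : ℝ | (y, z) ∈ T}).indicator (fun y => gaussianPDF z s2n y) y *
            gaussianPDF θ t2n z := by
      intro y
      by_cases hyT : (y, z) ∈ T
      · rw [Set.indicator_of_mem hyT, Set.indicator_of_mem (show y ∈ {y | (y, z) ∈ T} from hyT),
          mul_comm (gaussianPDF θ σ2 y)]
        exact density_eq' θ y z σ2 k hσ hk
      · rw [Set.indicator_of_notMem hyT,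
          Set.indicator_of_notMem (show y ∉ {y | (y, z) ∈ T} from hyT)]
        simp
    simp_rw [h1]
    rw [lintegral_mul_const _ ((measurable_gaussianPDF z s2n).indicator (hym z)),
      lintegral_indicator (hym z), ← gaussianReal_apply z hs2n_pos.ne']
    congr 1
    -- the conditional coverage: gaussianReal z s2n {y | (y,z) ∈ T} = c0
    have hpreB : {y : ℝ | (y, z) ∈ T}
        = (fun y => (1 + kr) * (z - y) / a) ⁻¹' {w : ℝ | Gfun (δ z) |w + δ z| < c0} := by
      rfl
    have hBm : MeasurableSet {w : ℝ | Gfun (δ z) |w + δ z| < c0} := by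
      apply measurableSet_lt _ measurable_const
      exact measurable_Gfun.comp (measurable_const.prodMk (by fun_prop))
    rw [hpreB, ← Measure.map_apply (by fun_prop) hBm]
    have hfun : (fun y : ℝ => (1 + kr) * (z - y) / a)
        = (fun u => u + (1 + kr) * z / a) ∘ ((-(1 + kr) / a) * ·) := by
      funext y
      simp only [Function.comp_apply]
      field_simp
      ring
    have hvar1 : (NNReal.mk ((-(1 + kr) / a) ^ 2) (sq_nonneg _) * s2n : ℝ≥0) = 1 := by
      rw [← NNReal.coe_inj]
      push_cast [hs2n_def]
      rw [div_pow, neg_pow, ha2]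
      field_simp
      ring
    have hmean1 : (-(1 + kr) / a) * z + (1 + kr) * z / a = 0 := by
      field_simp
      ring
    rw [hfun, ← Measure.map_map (measurable_add_const _) (measurable_const_mul _),
      gaussianReal_map_const_mul, gaussianReal_map_add_const, hvar1, hmean1]
    have hBset : {w : ℝ | Gfun (δ z) |w + δ z| < c0}
        = {w : ℝ | (w + δ z) ^ 2 < q (δ z ^ 2)} := by
      ext w
      exact (cond_iff hα hq (δ z) w).symm
    rw [hBset, hq]
  simp_rw [hzint]
  rw [lintegral_const_mul _ (measurable_gaussianPDF _ _),
    lintegral_gaussianPDF_eq_one θ ht2n_pos.ne', mul_one]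
end

section
/- Factorization under sufficiency transfers to conditional densities: suppose dP_θ/d(λ×μ) = h_θ(Z(x,y))·g(x,y) for all θ, where Z : X×Y → 𝒵 has countable fibers under counting-measure domination (discrete case), and y ↦ Z(x,y) is injective for each x. Then the conditional density of X given Z = z satisfies p_z^X(x) = g(x, Z_x⁻¹(z))/c_z for a normalizing constant c_z, so that on the event Z(x,y) = z, g(x,y) = c_z · p_z^X(x). -/
/-- Discrete factorization under sufficiency transfers to conditional densities: if
`p θ x y = h θ (Z x y) * g x y` with `h θ > 0`, `g ≥ 0`, and `y ↦ Z x y` injective for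
each `x`, then there is a normalizing function `c` such that the conditional pmf of `X`
given `Z = z` equals `g x y / c z` (when `Z x y = z`), i.e. `g x y = c z * p_z^X x`. -/
theorem discrete_sufficiency_conditional_density {X Y 𝒵 Θ : Type*}
    [Countable X] [Countable Y] [DecidableEq 𝒵]
    (Z : X → Y → 𝒵) (hinj : ∀ x, Function.Injective (Z x))
    (p : Θ → X → Y → ℝ) (h : Θ → 𝒵 → ℝ) (g : X → Y → ℝ)
    (hfact : ∀ θ x y, p θ x y = h θ (Z x y) * g x y)
    (hpos : ∀ θ z, 0 < h θ z) (hg : ∀ x y, 0 ≤ g x y)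
    (hsum : ∀ θ, Summable fun q : X × Y => p θ q.1 q.2) :
    ∃ c : 𝒵 → ℝ, ∀ θ x y,
      (∑' q : X × Y, if Z q.1 q.2 = Z x y then p θ q.1 q.2 else 0) ≠ 0 →
      ((∑' y', if Z x y' = Z x y then p θ x y' else 0) /
          (∑' q : X × Y, if Z q.1 q.2 = Z x y then p θ q.1 q.2 else 0)
        = g x y / c (Z x y)) ∧
      g x y = c (Z x y) *
        ((∑' y', if Z x y' = Z x y then p θ x y' else 0) /
          (∑' q : X × Y, if Z q.1 q.2 = Z x y then p θ q.1 q.2 else 0)) := by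
  refine ⟨fun z => ∑' q : X × Y, if Z q.1 q.2 = z then g q.1 q.2 else 0, ?_⟩
  intro θ x y hne
  set z := Z x y with hz
  set cz := ∑' q : X × Y, if Z q.1 q.2 = z then g q.1 q.2 else 0 with hcz
  have hden : (∑' q : X × Y, if Z q.1 q.2 = z then p θ q.1 q.2 else 0)
      = h θ z * cz := by
    rw [hcz, ← tsum_mul_left]
    congr 1; funext q
    split_ifs with hq
    · rw [hfact, hq]
    · ring
  have hnum : (∑' y', if Z x y' = z then p θ x y' else 0) = p θ x y := by
    rw [tsum_eq_single y]
    · rw [if_pos hz.symm]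
    · intro y' hy'
      rw [if_neg]
      exact fun hzy => hy' (hinj x (hzy.trans hz))
  have hcne : cz ≠ 0 := by
    intro h0
    exact hne (by rw [hden, h0, mul_zero])
  have hhne : h θ z ≠ 0 := (hpos θ z).ne'
  have hratio : (∑' y', if Z x y' = z then p θ x y' else 0) /
      (∑' q : X × Y, if Z q.1 q.2 = z then p θ q.1 q.2 else 0) = g x y / cz := by
    rw [hnum, hden, hfact, ← hz, mul_div_mul_left _ _ hhne]
  refine ⟨hratio, ?_⟩
  rw [hratio, mul_comm, div_mul_cancel₀ _ hcne]
end
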